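/- arXiv:2102.06616 — 4 statements merged into one kernel-verified Lean document; each statement's English description precedes it below -/
import Mathlib

section
/- Let n be a positive integer and define the (n+1)×(n+1) matrix A over the option type (star or integer) by: a_{i,j} = star if j ≤ i; a_{0,j} = j-1 for j > 0; and a_{i,j} = a_{i-1,j} + (n - i) for 0 < i < j. Then the integer entries of A are exactly the integers 0, 1, ..., n(n+1)/2 - 1, each appearing exactly once. -/
/-- A generalized placement delivery array predicate: an `F × Kc` array
(entries `none` = star, `some s` = integer) whose integer alphabet is `[lo, hi)`,
satisfying: C1 (exactly `Z` stars per column), all integers lie in `[lo, hi)`,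
C2 (every integer in `[lo, hi)` appears), and C3. -/
def isPDAgen (Kc F Z lo hi : ℕ) (P : ℕ → ℕ → Option ℕ) : Prop :=
  (∀ j < Kc, ((Finset.range F).filter (fun i => P i j = none)).card = Z) ∧
  (∀ i < F, ∀ j < Kc, ∀ s : ℕ, P i j = some s → lo ≤ s ∧ s < hi) ∧
  (∀ s : ℕ, lo ≤ s → s < hi → ∃ i < F, ∃ j < Kc, P i j = some s) ∧
  (∀ i₁ j₁ i₂ j₂ s, i₁ < F → j₁ < Kc → i₂ < F → j₂ < Kc →
    P i₁ j₁ = some s → P i₂ j₂ = some s → (i₁, j₁) ≠ (i₂, j₂) →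
    i₁ ≠ i₂ ∧ j₁ ≠ j₂ ∧ P i₁ j₂ = none ∧ P i₂ j₁ = none)

/-- A `(Kc, F, Z, S)` PDA with integer alphabet `[0, S)`. -/
def isPDA (Kc F Z S : ℕ) (P : ℕ → ℕ → Option ℕ) : Prop :=
  isPDAgen Kc F Z 0 S P

/-- `g`-regularity on alphabet `[lo, hi)`: each integer appears exactly `g` times. -/
def isRegularGen (g Kc F lo hi : ℕ) (P : ℕ → ℕ → Option ℕ) : Prop :=
  ∀ s : ℕ, lo ≤ s → s < hi →
    (((Finset.range F) ×ˢ (Finset.range Kc)).filter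
      (fun p => P p.1 p.2 = some s)).card = g

/-- `t`-cyclic: in each column the `Z` stars occupy (cyclically) consecutive rows,
and each column's starting star position is the previous column's shifted down by `t`. -/
def isCyclic (t Kc F Z : ℕ) (P : ℕ → ℕ → Option ℕ) : Prop :=
  ∃ start : ℕ → ℕ,
    (∀ j < Kc, ∀ i < F, (P i j = none ↔ ∃ r < Z, i = (start j + r) % F)) ∧
    (∀ j : ℕ, j + 1 < Kc → start (j + 1) % F = (start j + t) % F)

/-- The integer values of the matrix `A` of procedure 1:
`aVal n 0 j = j - 1` and `aVal n (i+1) j = aVal n i j + (n - (i+1))`. -/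
def aVal (n : ℕ) : ℕ → ℕ → ℕ
  | 0, j => j - 1
  | i + 1, j => aVal n i j + (n - (i + 1))

/-- The `(n+1) × (n+1)` matrix `A` of procedure 1: stars on and below the
diagonal, integers `aVal n i j` above it. -/
def Amat (n i j : ℕ) : Option ℕ :=
  if j ≤ i then none else some (aVal n i j)

/-- The block matrix `P₁` of procedure 2, with `b` row/column blocks of size
`n+1`: block `A` when the column block equals the row block, `Aᵀ` when the
column block is the row block plus one (mod `b`), and all-star otherwise. -/
def P1mat (n b i j : ℕ) : Option ℕ :=
  if j / (n + 1) = i / (n + 1) then Amat n (i % (n + 1)) (j % (n + 1))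
  else if j / (n + 1) = (i / (n + 1) + 1) % b then Amat n (j % (n + 1)) (i % (n + 1))
  else none

/-- The `K × (K/k)` matrix `P̃₁` of procedure 3: each row of `P₁` is expanded
into `k` rows, with integer entries incremented by `S₁ = (K-kL)(K-kL+k)/(2k²)`
from one row to the next. -/
def Ptilde1 (K k L i j : ℕ) : Option ℕ :=
  (P1mat ((K - k * L) / k) (K / (K - k * L + k)) (i / k) j).map
    (fun s => s + (i % k) * ((K - k * L) * (K - k * L + k) / (2 * k ^ 2)))

/-- The `K × K` matrix `P` of procedure 4: concatenation of
`P̃₁, P̃₁ + S̃₁, …, P̃₁ + (k-1)S̃₁` where `S̃₁ = (K-kL)(K-kL+k)/(2k)`. -/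
def Pfull (K k L i j : ℕ) : Option ℕ :=
  (Ptilde1 K k L i (j % (K / k))).map
    (fun s => s + (j / (K / k)) * ((K - k * L) * (K - k * L + k) / (2 * k)))

/-- Cumulative offsets: `Fv n i = Σ_{t=1}^{i} (n - t)`. -/
def Fv (n : ℕ) : ℕ → ℕ
  | 0 => 0
  | i + 1 => Fv n i + (n - (i + 1))

lemma aVal_eq (n : ℕ) : ∀ i j, aVal n i j = (j - 1) + Fv n i := by
  intro i j
  induction i with
  | zero => simp [aVal, Fv]
  | succ i ih => simp [aVal, Fv, ih]; omega

/-- Start of row `i`'s value range. -/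
def st (n i : ℕ) : ℕ := Fv n i + i

lemma st_succ {n i : ℕ} (h : i < n) : st n (i + 1) = st n i + (n - i) := by
  simp [st, Fv]; omega

lemma st_mono (n : ℕ) : Monotone (st n) := by
  apply monotone_nat_of_le_succ
  intro i
  simp [st, Fv]; omega

lemma two_st (n : ℕ) : ∀ i ≤ n, 2 * st n i = i * (2 * n + 1) - i * i := by
  intro i
  induction i with
  | zero => simp [st, Fv]
  | succ i ih =>
    intro h
    have h1 : i ≤ n := by omega
    have h2 := ih h1
    have h3 : st n (i + 1) = st n i + (n - i) := st_succ (by omega)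
    have h4 : (i + 1) * (2 * n + 1) = i * (2 * n + 1) + (2 * n + 1) := by ring
    have h5 : (i + 1) * (i + 1) = i * i + 2 * i + 1 := by ring
    have h6 : i * i ≤ i * (2 * n + 1) := Nat.mul_le_mul_left i (by omega)
    omega

lemma st_top (n : ℕ) : st n n = n * (n + 1) / 2 := by
  have h := two_st n n le_rfl
  have h4 : n * (2 * n + 1) = n * n + n * (n + 1) := by ring
  have h6 : n * n ≤ n * (2 * n + 1) := Nat.mul_le_mul_left n (by omega)
  omega

/-- Value range of row `i`. -/
lemma aVal_mem (n i j : ℕ) (hij : i < j) (hj : j ≤ n) :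
    st n i ≤ aVal n i j ∧ aVal n i j < st n (i + 1) := by
  have h1 := aVal_eq n i j
  have h2 : st n (i + 1) = st n i + (n - i) := st_succ (by omega)
  have h3 : st n i = Fv n i + i := rfl
  omega

lemma find_row (n : ℕ) (s : ℕ) : ∀ m ≤ n, s < st n m →
    ∃ i < m, st n i ≤ s ∧ s < st n (i + 1) := by
  intro m
  induction m with
  | zero => intro _ h; simp [st, Fv] at h
  | succ m ih =>
    intro hm hs
    by_cases h : st n m ≤ s
    · exact ⟨m, by omega, h, hs⟩
    · obtain ⟨i, hi, h1, h2⟩ := ih (by omega) (by omega)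
      exact ⟨i, by omega, h1, h2⟩

/-- The integer entries of the `(n+1) × (n+1)` matrix `A` of procedure 1 are
exactly the integers `0, 1, …, n(n+1)/2 - 1`, each appearing exactly once. -/
theorem stmt4 (n : ℕ) (hn : 0 < n) (s : ℕ) :
    (s < n * (n + 1) / 2 ↔ ∃ i ≤ n, ∃ j ≤ n, Amat n i j = some s) ∧
    (∀ i₁ j₁ i₂ j₂ : ℕ, i₁ ≤ n → j₁ ≤ n → i₂ ≤ n → j₂ ≤ n →
      Amat n i₁ j₁ = some s → Amat n i₂ j₂ = some s → i₁ = i₂ ∧ j₁ = j₂) := by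
  have key : ∀ i j, i ≤ n → j ≤ n → Amat n i j = some s →
      i < j ∧ st n i ≤ s ∧ s < st n (i + 1) ∧ s = (j - 1) + Fv n i := by
    intro i j hi hj hA
    unfold Amat at hA
    split at hA
    · exact absurd hA (by simp)
    · rename_i h
      have hij : i < j := by omega
      obtain ⟨h1, h2⟩ := aVal_mem n i j hij hj
      have hs : aVal n i j = s := by injection hA
      exact ⟨hij, by omega, by omega, by rw [← hs, aVal_eq]⟩
  constructor
  · constructor
    · intro hs
      have hs' : s < st n n := by rw [st_top]; exact hs
      obtain ⟨i, hi, h1, h2⟩ := find_row n s n le_rfl hs'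
      refine ⟨i, by omega, s - st n i + i + 1, ?_, ?_⟩
      · have := st_succ (show i < n by omega)
        omega
      · have hst : st n (i + 1) = st n i + (n - i) := st_succ (by omega)
        have hA : Amat n i (s - st n i + i + 1) = some (aVal n i (s - st n i + i + 1)) := by
          unfold Amat; rw [if_neg (by omega)]
        rw [hA, aVal_eq]
        have : st n i = Fv n i + i := rfl
        congr 1
        omega
    · rintro ⟨i, hi, j, hj, hA⟩
      obtain ⟨hij, h1, h2, h3⟩ := key i j hi hj hA
      rw [← st_top]
      exact lt_of_lt_of_le h2 (st_mono n (by omega))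
  · intro i₁ j₁ i₂ j₂ hi₁ hj₁ hi₂ hj₂ hA₁ hA₂
    obtain ⟨hij₁, a1, a2, a3⟩ := key i₁ j₁ hi₁ hj₁ hA₁
    obtain ⟨hij₂, b1, b2, b3⟩ := key i₂ j₂ hi₂ hj₂ hA₂
    have hii : i₁ = i₂ := by
      by_contra h
      rcases Nat.lt_or_ge i₁ i₂ with hlt | hge
      · have := st_mono n (show i₁ + 1 ≤ i₂ by omega); omega
      · have := st_mono n (show i₂ + 1 ≤ i₁ by omega); omega
    subst hii
    exact ⟨rfl, by omega⟩
end

section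
/- The matrix P₁ obtained from procedure 2 of Algorithm 2 is a 1-cyclic 2K/(K-kL+k)-regular (K/k, K/k, L, (K-kL)(K-kL+k)/(2k²)) placement delivery array. -/
lemma mod_two_mul {a b : ℕ} (h : a < 2*b) :
    a % b = if a < b then a else a - b := by
  split_ifs with h'
  · exact Nat.mod_eq_of_lt h'
  · rw [Nat.mod_eq_sub_mod (le_of_not_gt h'), Nat.mod_eq_of_lt (by omega)]

lemma aval_eq (n i j : ℕ) (hj : 1 ≤ j) : aVal n i j = aVal n i 1 + (j - 1) := by
  induction i with
  | zero => simp [aVal]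
  | succ i ih => simp only [aVal, ih]; omega

/-- lower bound marker `D i = aVal n i 1 + i`. -/
def Dd (n i : ℕ) : ℕ := aVal n i 1 + i

lemma Dd_succ (n i : ℕ) (h : i < n) : Dd n (i+1) = Dd n i + (n - i) := by
  simp only [Dd, aVal]; omega

lemma Dd_mono (n : ℕ) : ∀ {i i' : ℕ}, i ≤ i' → i' ≤ n → Dd n i ≤ Dd n i' := by
  intro i i' h h'
  induction i' with
  | zero =>
    have : i = 0 := by omega
    subst this; rfl
  | succ m ih =>
    rcases Nat.eq_or_lt_of_le h with rfl | h2
    · rfl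
    · have := Dd_succ n m (by omega)
      have := ih (by omega) (by omega)
      omega

lemma Dd_strict (n i i' : ℕ) (h : i < i') (h' : i' ≤ n) : Dd n (i+1) ≤ Dd n i' :=
  Dd_mono n h h'

lemma two_Dd (n : ℕ) : ∀ i, i ≤ n → 2 * Dd n i + i*i = 2*n*i + i := by
  intro i hi
  induction i with
  | zero => simp [Dd, aVal]
  | succ m ih =>
    have h1 := Dd_succ n m (by omega)
    have h2 := ih (by omega)
    have e1 : (m+1)*(m+1) = m*m + 2*m + 1 := by ring
    have e2 : 2*n*(m+1) = 2*n*m + 2*n := by ring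
    omega

lemma Dd_top (n : ℕ) : 2 * Dd n n = n * (n+1) := by
  have := two_Dd n n le_rfl
  nlinarith [this]

lemma Dd_top' (n : ℕ) : Dd n n = n * (n+1) / 2 := by
  have := Dd_top n
  omega

lemma aval_bounds (n i j : ℕ) (hij : i < j) (hjn : j ≤ n) :
    Dd n i ≤ aVal n i j ∧ aVal n i j < Dd n (i+1) := by
  have h1 := aval_eq n i j (by omega)
  have h2 := Dd_succ n i (by omega)
  simp only [Dd] at *
  omega

lemma aval_lt (n i j : ℕ) (hij : i < j) (hjn : j ≤ n) : aVal n i j < n*(n+1)/2 := by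
  have h1 := (aval_bounds n i j hij hjn).2
  have h2 := Dd_mono n (show i+1 ≤ n by omega) le_rfl
  have := Dd_top' n
  omega

lemma aval_inj (n i j i' j' : ℕ) (hij : i < j) (hjn : j ≤ n) (hij' : i' < j') (hjn' : j' ≤ n)
    (h : aVal n i j = aVal n i' j') : i = i' ∧ j = j' := by
  have b1 := aval_bounds n i j hij hjn
  have b2 := aval_bounds n i' j' hij' hjn'
  have hii : i = i' := by
    rcases lt_trichotomy i i' with h' | h' | h'
    · have := Dd_mono n (show i+1 ≤ i' by omega) (by omega); omega
    · exact h'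
    · have := Dd_mono n (show i'+1 ≤ i by omega) (by omega); omega
  subst hii
  have := aval_eq n i j (by omega)
  have := aval_eq n i j' (by omega)
  omega

lemma aval_surj (n : ℕ) : ∀ s < n*(n+1)/2, ∃ i j, i < j ∧ j ≤ n ∧ aVal n i j = s := by
  have key : ∀ m, m ≤ n → ∀ s < Dd n m, ∃ i j, i < j ∧ j ≤ n ∧ aVal n i j = s := by
    intro m
    induction m with
    | zero => intro _ s hs; simp [Dd, aVal] at hs
    | succ m ih =>
      intro hm s hs
      by_cases h : s < Dd n m
      · exact ih (by omega) s h
      · refine ⟨m, s - aVal n m 1 + 1, ?_, ?_, ?_⟩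
        · simp only [Dd] at h; omega
        · have := Dd_succ n m (by omega); simp only [Dd] at *; omega
        · rw [aval_eq n m _ (by omega)]; simp only [Dd] at h; omega
  intro s hs
  exact key n le_rfl s (by rw [Dd_top']; exact hs)






lemma blk_div (n p x : ℕ) (hx : x ≤ n) : (p*(n+1)+x) / (n+1) = p := by
  rw [Nat.add_comm, mul_comm p (n+1), Nat.add_mul_div_left _ _ (Nat.succ_pos n),
    Nat.div_eq_of_lt (by omega)]
  omega

lemma blk_mod (n p x : ℕ) (hx : x ≤ n) : (p*(n+1)+x) % (n+1) = x := by
  rw [Nat.add_comm, mul_comm p (n+1), Nat.add_mul_mod_self_left, Nat.mod_eq_of_lt (by omega)]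

lemma blk_lt (n b p x : ℕ) (hp : p < b) (hx : x ≤ n) : p*(n+1)+x < b*(n+1) := by
  have h1 : (p+1)*(n+1) ≤ b*(n+1) := Nat.mul_le_mul_right _ (by omega)
  have h2 : (p+1)*(n+1) = p*(n+1) + (n+1) := by ring
  omega

lemma P1_entry (n b p q x y : ℕ) (hx : x ≤ n) (hy : y ≤ n) :
    P1mat n b (p*(n+1)+x) (q*(n+1)+y) =
      if q = p then Amat n x y else if q = (p+1)%b then Amat n y x else none := by
  simp only [P1mat, blk_div n p x hx, blk_div n q y hy, blk_mod n p x hx, blk_mod n q y hy]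

lemma n_lt_Z (n b : ℕ) (hb : 2 ≤ b) : n < b*(n+1) - n := by
  have h1 : 2*(n+1) ≤ b*(n+1) := Nat.mul_le_mul_right _ hb
  omega

lemma nonstar_iff (n b : ℕ) (hb : 2 ≤ b) (p q x y : ℕ) (hp : p < b) (hq : q < b)
    (hx : x ≤ n) (hy : y ≤ n) :
    P1mat n b (p*(n+1)+x) (q*(n+1)+y) = none ↔
      (p*(n+1)+x + b*(n+1) - (q*(n+1)+y)) % (b*(n+1)) < b*(n+1) - n := by
  have hF2 : 2*(n+1) ≤ b*(n+1) := Nat.mul_le_mul_right _ hb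
  rw [P1_entry n b p q x y hx hy]
  by_cases hqp : q = p
  · subst hqp
    have hd : q*(n+1)+x + b*(n+1) - (q*(n+1)+y) = x + b*(n+1) - y := by omega
    rw [if_pos rfl, hd]
    rcases le_or_gt y x with h | h
    · have e1 : x + b*(n+1) - y = (x - y) + b*(n+1) := by omega
      rw [e1, Nat.add_mod_right, Nat.mod_eq_of_lt (by omega)]
      simp [Amat, h]
      omega
    · have e1 : (x + b*(n+1) - y) % (b*(n+1)) = x + b*(n+1) - y :=
        Nat.mod_eq_of_lt (by omega)
      rw [e1]
      simp [Amat, h, Nat.not_le.mpr h]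
      omega
  · rw [if_neg hqp]
    set e := p + b - q with he
    have he1 : 1 ≤ e := by omega
    have he2 : e < 2*b := by omega
    have hkey : e*(n+1) + q*(n+1) = p*(n+1) + b*(n+1) := by
      have h0 : e + q = p + b := by omega
      have h1 := congrArg (· * (n+1)) h0
      simpa [add_mul] using h1
    set m := e % b with hm
    have hmlt : m < b := Nat.mod_lt _ (by omega)
    have hmif := mod_two_mul (b := b) he2
    have hmcases : m = e ∨ (b ≤ e ∧ m + b = e) := by
      rw [hm, hmif]
      split_ifs with h
      · left; rfl
      · right; omega
    have hm0 : 1 ≤ m := by omega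
    have hmn : m*(n+1) + (n+1) ≤ b*(n+1) := by
      have h1 : (m+1)*(n+1) ≤ b*(n+1) := Nat.mul_le_mul_right _ hmlt
      have h2 : (m+1)*(n+1) = m*(n+1)+(n+1) := by ring
      omega
    have hm1n : (n+1) ≤ m*(n+1) := by
      have h1 : 1*(n+1) ≤ m*(n+1) := Nat.mul_le_mul_right _ hm0
      omega
    have hv : (p*(n+1)+x + b*(n+1) - (q*(n+1)+y)) % (b*(n+1)) = m*(n+1)+x-y := by
      rcases hmcases with h | ⟨hbe, h⟩
      · have hme : m*(n+1) = e*(n+1) := by rw [h]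
        have e2 : p*(n+1)+x + b*(n+1) - (q*(n+1)+y) = m*(n+1)+x-y := by omega
        rw [e2]
        exact Nat.mod_eq_of_lt (by omega)
      · have hme : m*(n+1) + b*(n+1) = e*(n+1) := by
          have := congrArg (· * (n+1)) h
          simpa [add_mul] using this
        have e2 : p*(n+1)+x + b*(n+1) - (q*(n+1)+y) = (m*(n+1)+x-y) + b*(n+1) := by omega
        rw [e2, Nat.add_mod_right]
        exact Nat.mod_eq_of_lt (by omega)
    rw [hv]
    have hp1 : (p+1)%b = if p + 1 < b then p+1 else 0 := by
      split_ifs with h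
      · exact Nat.mod_eq_of_lt h
      · have hpb : p+1 = b := by omega
        rw [hpb]; exact Nat.mod_self b
    by_cases hq1 : q = (p+1)%b
    · rw [if_pos hq1]
      rw [hp1] at hq1
      have hmb : m + 1 = b := by
        split_ifs at hq1 <;> omega
      have hmb1 : m*(n+1) + (n+1) = b*(n+1) := by
        have := congrArg (· * (n+1)) hmb
        simpa [add_mul] using this
      unfold Amat
      split_ifs with hxy
      · simp; omega
      · simp; omega
    · rw [if_neg hq1]
      rw [hp1] at hq1
      have hmb : m + 1 ≠ b := by
        split_ifs at hq1 <;> omega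
      have hm2 : m*(n+1) + 2*(n+1) ≤ b*(n+1) := by
        have h1 : (m+2)*(n+1) ≤ b*(n+1) := Nat.mul_le_mul_right _ (by omega)
        have h2 : (m+2)*(n+1) = m*(n+1)+2*(n+1) := by ring
        omega
      simp
      omega

lemma decomp (n b i : ℕ) (hi : i < b*(n+1)) :
    ∃ p x, p < b ∧ x ≤ n ∧ i = p*(n+1)+x := by
  refine ⟨i/(n+1), i%(n+1), ?_, ?_, ?_⟩
  · exact (Nat.div_lt_iff_lt_mul (Nat.succ_pos n)).mpr hi
  · exact Nat.lt_succ_iff.mp (Nat.mod_lt _ (Nat.succ_pos n))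
  · have := Nat.div_add_mod i (n+1)
    have h2 : (n+1)*(i/(n+1)) = (i/(n+1))*(n+1) := mul_comm _ _
    omega

lemma mod_shift {F i j : ℕ} (hi : i < F) (hj : j < F) (r : ℕ) (hr : r < F) :
    i = (j + r) % F ↔ r = (i + F - j) % F := by
  have hF : 0 < F := by omega
  constructor
  · rintro rfl
    rcases lt_or_ge (j + r) F with h | h
    · rw [Nat.mod_eq_of_lt h]
      have : j + r + F - j = r + F := by omega
      rw [this, Nat.add_mod_right, Nat.mod_eq_of_lt hr]
    · have h2 : (j+r) % F = j + r - F := by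
        rw [Nat.mod_eq_sub_mod h, Nat.mod_eq_of_lt (by omega)]
      rw [h2]
      have : j + r - F + F - j = r := by omega
      rw [this, Nat.mod_eq_of_lt hr]
  · rintro rfl
    rcases lt_or_ge i j with h | h
    · have : (i + F - j) % F = i + F - j := Nat.mod_eq_of_lt (by omega)
      rw [this]
      have : j + (i + F - j) = i + F := by omega
      rw [this, Nat.add_mod_right, Nat.mod_eq_of_lt hi]
    · have e0 : i + F - j - F = i - j := by omega
      have : (i + F - j) % F = i - j := by
        rw [Nat.mod_eq_sub_mod (by omega), e0, Nat.mod_eq_of_lt (by omega)]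
      rw [this]
      have : j + (i - j) = i := by omega
      rw [this, Nat.mod_eq_of_lt hi]

lemma star_iff (n b : ℕ) (hb : 2 ≤ b) {i j : ℕ} (hi : i < b*(n+1)) (hj : j < b*(n+1)) :
    P1mat n b i j = none ↔ ∃ r < b*(n+1) - n, i = (j + r) % (b*(n+1)) := by
  have hZ := n_lt_Z n b hb
  obtain ⟨p, x, hp, hx, rfl⟩ := decomp n b i hi
  obtain ⟨q, y, hq, hy, rfl⟩ := decomp n b j hj
  rw [nonstar_iff n b hb p q x y hp hq hx hy]
  constructor
  · intro hd
    exact ⟨_, hd, (mod_shift hi hj _ (by omega)).mpr rfl⟩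
  · rintro ⟨r, hr, hir⟩
    have := (mod_shift hi hj r (by omega)).mp hir
    omega

lemma entry_some (n b : ℕ) (hb : 2 ≤ b) {i j s : ℕ} (hi : i < b*(n+1)) (hj : j < b*(n+1))
    (h : P1mat n b i j = some s) :
    ∃ p < b, ∃ i₀ j₀, i₀ < j₀ ∧ j₀ ≤ n ∧ aVal n i₀ j₀ = s ∧
      ((i = p*(n+1)+i₀ ∧ j = p*(n+1)+j₀) ∨
       (i = p*(n+1)+j₀ ∧ j = ((p+1)%b)*(n+1)+i₀)) := by
  obtain ⟨p, x, hp, hx, rfl⟩ := decomp n b i hi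
  obtain ⟨q, y, hq, hy, rfl⟩ := decomp n b j hj
  rw [P1_entry n b p q x y hx hy] at h
  by_cases hqp : q = p
  · subst hqp
    rw [if_pos rfl] at h
    by_cases hyx : y ≤ x
    · simp [Amat, hyx] at h
    · simp [Amat, hyx] at h
      exact ⟨q, hq, x, y, by omega, hy, h, Or.inl ⟨rfl, rfl⟩⟩
  · rw [if_neg hqp] at h
    split_ifs at h with hq1
    by_cases hxy : x ≤ y
    · simp [Amat, hxy] at h
    · simp [Amat, hxy] at h
      exact ⟨p, hp, y, x, by omega, hx, h, Or.inr ⟨rfl, by rw [hq1]⟩⟩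

lemma blk_eq {n p p' x x' : ℕ} (hx : x ≤ n) (hx' : x' ≤ n)
    (h : p*(n+1)+x = p'*(n+1)+x') : p = p' ∧ x = x' := by
  constructor
  · have := congrArg (· / (n+1)) h
    simpa [blk_div n p x hx, blk_div n p' x' hx'] using this
  · have := congrArg (· % (n+1)) h
    simpa [blk_mod n p x hx, blk_mod n p' x' hx'] using this

lemma succ_mod_inj {b p p' : ℕ} (hp : p < b) (hp' : p' < b) (h : (p+1)%b = (p'+1)%b) :
    p = p' := by
  have e1 := mod_two_mul (a := p+1) (b := b) (by omega)
  have e2 := mod_two_mul (a := p'+1) (b := b) (by omega)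
  rw [e1, e2] at h
  split_ifs at h <;> omega

lemma succ_mod_ne {b p : ℕ} (hb : 2 ≤ b) (hp : p < b) : (p+1)%b ≠ p := by
  have e1 := mod_two_mul (a := p+1) (b := b) (by omega)
  rw [e1]
  split_ifs <;> omega

lemma succ_mod_lt {b p : ℕ} (hb : 2 ≤ b) : (p+1)%b < b := Nat.mod_lt _ (by omega)

lemma corner_diagloc (n b p q u : ℕ) (hu : u ≤ n) :
    P1mat n b (p*(n+1)+u) (q*(n+1)+u) = none := by
  rw [P1_entry n b p q u u hu hu]
  split_ifs <;> simp [Amat]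

lemma corner_le (n b p q u v : ℕ) (hpq : q ≠ p) (huv : u ≤ v) (hu : u ≤ n) (hv : v ≤ n) :
    P1mat n b (p*(n+1)+u) (q*(n+1)+v) = none := by
  rw [P1_entry n b p q u v hu hv, if_neg hpq]
  split_ifs with h
  · simp [Amat, huv]
  · rfl

lemma corner_ge (n b p q u v : ℕ) (hpq : q ≠ (p+1)%b) (hvu : v ≤ u) (hu : u ≤ n) (hv : v ≤ n) :
    P1mat n b (p*(n+1)+u) (q*(n+1)+v) = none := by
  rw [P1_entry n b p q u v hu hv]
  by_cases h1 : q = p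
  · rw [if_pos h1]; simp [Amat, hvu]
  · rw [if_neg h1, if_neg hpq]

lemma C3lem (n b : ℕ) (hb : 2 ≤ b) {i₁ j₁ i₂ j₂ s : ℕ}
    (h1 : i₁ < b*(n+1)) (h2 : j₁ < b*(n+1)) (h3 : i₂ < b*(n+1)) (h4 : j₂ < b*(n+1))
    (e1 : P1mat n b i₁ j₁ = some s) (e2 : P1mat n b i₂ j₂ = some s)
    (hne : (i₁, j₁) ≠ (i₂, j₂)) :
    i₁ ≠ i₂ ∧ j₁ ≠ j₂ ∧ P1mat n b i₁ j₂ = none ∧ P1mat n b i₂ j₁ = none := by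
  obtain ⟨p, hp, a, c, hac, hcn, hval, hcase⟩ := entry_some n b hb h1 h2 e1
  obtain ⟨p', hp', a', c', hac', hcn', hval', hcase'⟩ := entry_some n b hb h3 h4 e2
  obtain ⟨rfl, rfl⟩ : a = a' ∧ c = c' :=
    aval_inj n a c a' c' hac hcn hac' hcn' (hval.trans hval'.symm)
  have han : a ≤ n := by omega
  rcases hcase with ⟨ri1, rj1⟩ | ⟨ri1, rj1⟩ <;> rcases hcase' with ⟨ri2, rj2⟩ | ⟨ri2, rj2⟩ <;>
    subst ri1 <;> subst rj1 <;> subst ri2 <;> subst rj2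
  · -- A / A
    have hpp : p ≠ p' := by rintro rfl; exact hne rfl
    refine ⟨fun h => hpp (blk_eq han han h).1, fun h => hpp (blk_eq hcn hcn h).1, ?_, ?_⟩
    · exact corner_le n b p p' a c (Ne.symm hpp) (le_of_lt hac) han hcn
    · exact corner_le n b p' p a c hpp (le_of_lt hac) han hcn
  · -- A / T
    refine ⟨fun h => (by omega : a ≠ c) (blk_eq han hcn h).2,
            fun h => (by omega : c ≠ a) (blk_eq hcn han h).2, ?_, ?_⟩
    · exact corner_diagloc n b p ((p'+1)%b) a han
    · exact corner_diagloc n b p' p c hcn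
  · -- T / A
    refine ⟨fun h => (by omega : c ≠ a) (blk_eq hcn han h).2,
            fun h => (by omega : a ≠ c) (blk_eq han hcn h).2, ?_, ?_⟩
    · exact corner_diagloc n b p p' c hcn
    · exact corner_diagloc n b p' ((p+1)%b) a han
  · -- T / T
    have hpp : p ≠ p' := by rintro rfl; exact hne rfl
    have hq : (p+1)%b ≠ (p'+1)%b := fun h => hpp (succ_mod_inj hp hp' h)
    refine ⟨fun h => hpp (blk_eq hcn hcn h).1,
            fun h => hq (blk_eq han han h).1, ?_, ?_⟩
    · exact corner_ge n b p ((p'+1)%b) c a (Ne.symm hq) (le_of_lt hac) hcn han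
    · exact corner_ge n b p' ((p+1)%b) c a hq (le_of_lt hac) hcn han

lemma F_pos (n b : ℕ) (hb : 2 ≤ b) : 2*(n+1) ≤ b*(n+1) := Nat.mul_le_mul_right _ hb

lemma col_count (n b : ℕ) (hb : 2 ≤ b) (j : ℕ) (hj : j < b*(n+1)) :
    ((Finset.range (b*(n+1))).filter (fun i => P1mat n b i j = none)).card
      = b*(n+1) - n := by
  have hF2 := F_pos n b hb
  have hF : 0 < b*(n+1) := by omega
  have himg : (Finset.range (b*(n+1))).filter (fun i => P1mat n b i j = none)
      = (Finset.range (b*(n+1)-n)).image (fun r => (j + r) % (b*(n+1))) := by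
    ext i
    simp only [Finset.mem_filter, Finset.mem_image, Finset.mem_range]
    constructor
    · rintro ⟨hi, hnone⟩
      obtain ⟨r, hr, hir⟩ := (star_iff n b hb hi hj).mp hnone
      exact ⟨r, hr, hir.symm⟩
    · rintro ⟨r, hr, rfl⟩
      have hlt : (j + r) % (b*(n+1)) < b*(n+1) := Nat.mod_lt _ hF
      exact ⟨hlt, (star_iff n b hb hlt hj).mpr ⟨r, hr, rfl⟩⟩
  rw [himg, Finset.card_image_of_injOn, Finset.card_range]
  intro r hr r' hr' hrr
  simp only [Finset.mem_coe, Finset.mem_range] at hr hr'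
  have e1 := mod_two_mul (a := j+r) (b := b*(n+1)) (by omega)
  have e2 := mod_two_mul (a := j+r') (b := b*(n+1)) (by omega)
  simp only at hrr
  rw [e1, e2] at hrr
  split_ifs at hrr <;> omega

lemma entry_bound (n b : ℕ) (hb : 2 ≤ b) {i j s : ℕ} (hi : i < b*(n+1)) (hj : j < b*(n+1))
    (h : P1mat n b i j = some s) : s < n*(n+1)/2 := by
  obtain ⟨p, hp, i₀, j₀, hij, hjn, hval, _⟩ := entry_some n b hb hi hj h
  have := aval_lt n i₀ j₀ hij hjn
  omega

lemma exists_entry (n b : ℕ) (hb : 2 ≤ b) (s : ℕ) (hs : s < n*(n+1)/2) :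
    ∃ i < b*(n+1), ∃ j < b*(n+1), P1mat n b i j = some s := by
  obtain ⟨i₀, j₀, hij, hjn, hval⟩ := aval_surj n s hs
  have hF2 := F_pos n b hb
  refine ⟨i₀, by omega, j₀, by omega, ?_⟩
  have hA : Amat n i₀ j₀ = some s := by
    unfold Amat
    rw [if_neg (by omega : ¬ j₀ ≤ i₀)]
    exact congrArg some hval
  have h := P1_entry n b 0 0 i₀ j₀ (by omega) hjn
  simp only [zero_mul, zero_add] at h
  rw [h, if_pos (by trivial)]
  exact hA

lemma reg_count (n b : ℕ) (hb : 2 ≤ b) (s : ℕ) (hs : s < n*(n+1)/2) :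
    (((Finset.range (b*(n+1))) ×ˢ (Finset.range (b*(n+1)))).filter
      (fun p => P1mat n b p.1 p.2 = some s)).card = 2*b := by
  obtain ⟨i₀, j₀, hij, hjn, hval⟩ := aval_surj n s hs
  have hin : i₀ ≤ n := by omega
  set f1 : ℕ → ℕ × ℕ := fun p => (p*(n+1)+i₀, p*(n+1)+j₀) with hf1
  set f2 : ℕ → ℕ × ℕ := fun p => (p*(n+1)+j₀, ((p+1)%b)*(n+1)+i₀) with hf2
  have hset : ((Finset.range (b*(n+1))) ×ˢ (Finset.range (b*(n+1)))).filter
      (fun p => P1mat n b p.1 p.2 = some s)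
      = (Finset.range b).image f1 ∪ (Finset.range b).image f2 := by
    ext ⟨u, v⟩
    simp only [Finset.mem_filter, Finset.mem_product, Finset.mem_range, Finset.mem_union,
      Finset.mem_image, hf1, hf2]
    constructor
    · rintro ⟨⟨hu, hv⟩, hs'⟩
      obtain ⟨p, hp, a, c, hac, hcn, hval', hcase⟩ := entry_some n b hb hu hv hs'
      obtain ⟨rfl, rfl⟩ : a = i₀ ∧ c = j₀ :=
        aval_inj n a c i₀ j₀ hac hcn hij hjn (hval'.trans hval.symm)
      rcases hcase with ⟨h1, h2⟩ | ⟨h1, h2⟩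
      · exact Or.inl ⟨p, hp, by rw [h1, h2]⟩
      · exact Or.inr ⟨p, hp, by rw [h1, h2]⟩
    · have hA : Amat n i₀ j₀ = some s := by
        unfold Amat
        rw [if_neg (by omega : ¬ j₀ ≤ i₀)]
        exact congrArg some hval
      rintro (⟨p, hp, he⟩ | ⟨p, hp, he⟩) <;> cases he
      · refine ⟨⟨blk_lt n b p i₀ hp hin, blk_lt n b p j₀ hp hjn⟩, ?_⟩
        rw [P1_entry n b p p i₀ j₀ hin hjn, if_pos rfl]
        exact hA
      · refine ⟨⟨blk_lt n b p j₀ hp hjn, blk_lt n b ((p+1)%b) i₀ (succ_mod_lt hb) hin⟩, ?_⟩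
        rw [P1_entry n b p ((p+1)%b) j₀ i₀ hjn hin, if_neg (succ_mod_ne hb hp), if_pos rfl]
        exact hA
  rw [hset]
  have hinj1 : Set.InjOn f1 (Finset.range b) := by
    intro p _ p' _ h
    simp only [hf1, Prod.mk.injEq] at h
    exact (blk_eq hin hin h.1).1
  have hinj2 : Set.InjOn f2 (Finset.range b) := by
    intro p _ p' _ h
    simp only [hf2, Prod.mk.injEq] at h
    exact (blk_eq hjn hjn h.1).1
  have hdisj : Disjoint ((Finset.range b).image f1) ((Finset.range b).image f2) := by
    rw [Finset.disjoint_left]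
    rintro ⟨u, v⟩ hm1 hm2
    simp only [Finset.mem_image, Finset.mem_range, hf1, hf2, Prod.mk.injEq] at hm1 hm2
    obtain ⟨p, hp, hpe, -⟩ := hm1
    obtain ⟨p', hp', hpe', -⟩ := hm2
    have := (blk_eq hin hjn (hpe.trans hpe'.symm)).2
    omega
  rw [Finset.card_union_of_disjoint hdisj, Finset.card_image_of_injOn hinj1,
    Finset.card_image_of_injOn hinj2, Finset.card_range]
  ring

theorem mainPDA (n b : ℕ) (hb : 2 ≤ b) :
    isPDA (b*(n+1)) (b*(n+1)) (b*(n+1)-n) (n*(n+1)/2) (P1mat n b) ∧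
    isRegularGen (2*b) (b*(n+1)) (b*(n+1)) 0 (n*(n+1)/2) (P1mat n b) ∧
    isCyclic 1 (b*(n+1)) (b*(n+1)) (b*(n+1)-n) (P1mat n b) := by
  refine ⟨⟨?_, ?_, ?_, ?_⟩, ?_, ?_⟩
  · intro j hj
    exact col_count n b hb j hj
  · intro i hi j hj s h
    exact ⟨Nat.zero_le _, entry_bound n b hb hi hj h⟩
  · intro s _ hs
    exact exists_entry n b hb s hs
  · intro i₁ j₁ i₂ j₂ s h1 h2 h3 h4 e1 e2 hne
    exact C3lem n b hb h1 h2 h3 h4 e1 e2 hne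
  · intro s _ hs
    exact reg_count n b hb s hs
  · refine ⟨fun j => j, fun j hj i hi => star_iff n b hb hi hj, fun j _ => rfl⟩

/-- The matrix `P₁` obtained from procedure 2 of Algorithm 2 is a 1-cyclic
`2K/(K-kL+k)`-regular `(K/k, K/k, L, (K-kL)(K-kL+k)/(2k²))` PDA. -/
theorem stmt9 (K k L : ℕ) (hk : 0 < k) (hL : 0 < L) (hKL : k * L < K)
    (hdk : k ∣ K) (hdv : (K - k * L + k) ∣ K)
    (hb : 2 ≤ K / (K - k * L + k)) :
    isPDA (K / k) (K / k) L ((K - k * L) * (K - k * L + k) / (2 * k ^ 2))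
      (P1mat ((K - k * L) / k) (K / (K - k * L + k))) ∧
    isRegularGen (2 * K / (K - k * L + k)) (K / k) (K / k) 0
      ((K - k * L) * (K - k * L + k) / (2 * k ^ 2))
      (P1mat ((K - k * L) / k) (K / (K - k * L + k))) ∧
    isCyclic 1 (K / k) (K / k) L
      (P1mat ((K - k * L) / k) (K / (K - k * L + k))) := by
  obtain ⟨n, hn⟩ : k ∣ K - k * L := Nat.dvd_sub hdk (dvd_mul_right k L)
  have hkn : K - k * L = k * n := hn
  have hsum : K = k * L + k * n := by omega
  have hplus : K - k * L + k = k * (n + 1) := by rw [hkn]; ring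
  rw [hplus] at hdv hb ⊢
  obtain ⟨b, hbK⟩ : k * (n + 1) ∣ K := hdv
  have hkpos : 0 < k * (n+1) := by positivity
  have e2 : K / (k * (n + 1)) = b := by rw [hbK, Nat.mul_div_cancel_left _ hkpos]
  rw [e2] at hb ⊢
  have e1 : (K - k * L) / k = n := by rw [hkn, Nat.mul_div_cancel_left _ hk]
  rw [e1]
  have e3 : K / k = b * (n + 1) := by
    rw [hbK, show k * (n+1) * b = k * (b * (n+1)) by ring, Nat.mul_div_cancel_left _ hk]
  rw [e3]
  have e6 : L = b * (n + 1) - n := by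
    have h1 : k * L + k * n = k * (b * (n+1)) := by
      rw [← hsum, hbK]; ring
    have h2 : L + n = b * (n+1) := by
      have := Nat.eq_of_mul_eq_mul_left hk (show k * (L + n) = k * (b*(n+1)) by rw [Nat.mul_add]; omega)
      omega
    omega
  have e4 : (K - k * L) * (k * (n + 1)) / (2 * k ^ 2) = n * (n + 1) / 2 := by
    rw [hkn, show k * n * (k * (n+1)) = k ^ 2 * (n * (n+1)) by ring,
      show 2 * k ^ 2 = k ^ 2 * 2 by ring,
      Nat.mul_div_mul_left _ _ (by positivity)]
  rw [e4]
  have e5 : 2 * K / (k * (n + 1)) = 2 * b := by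
    rw [hbK, show 2 * (k * (n+1) * b) = k * (n+1) * (2 * b) by ring,
      Nat.mul_div_cancel_left _ hkpos]
  rw [e5, e6]
  exact mainPDA n b hb
end

section
/- The K × (K/k) matrix P̃₁ obtained from procedure 3 of Algorithm 2 is a k-cyclic 2K/(K-kL+k)-regular (K/k, K, kL, (K-kL)(K-kL+k)/(2k)) placement delivery array. -/
lemma modHelper (k m a t : ℕ) (ht : t < k) (hm : 0 < m) :
    (k * a + t) % (k * m) = k * (a % m) + t := by
  have h1 : k * a + t = (k * m) * (a / m) + (k * (a % m) + t) := by
    conv_lhs => rw [← Nat.div_add_mod a m]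
    ring
  rw [h1, Nat.mul_add_mod]
  have h2 : a % m < m := Nat.mod_lt a hm
  exact Nat.mod_eq_of_lt (by nlinarith)

lemma expandCard (k m : ℕ) (hk : 0 < k) (Q : ℕ → Prop) [DecidablePred Q] :
    ((Finset.range (k * m)).filter (fun i => Q (i / k))).card
      = k * ((Finset.range m).filter Q).card := by
  have key : ((Finset.range (k * m)).filter (fun i => Q (i / k))).card
      = ((Finset.range k) ×ˢ ((Finset.range m).filter Q)).card := by
    apply Finset.card_nbij' (fun i => (i % k, i / k)) (fun p => p.2 * k + p.1)
    · intro a ha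
      simp only [Finset.mem_coe, Finset.mem_filter, Finset.mem_range, Finset.mem_product] at ha ⊢
      exact ⟨Nat.mod_lt a hk, by rw [Nat.div_lt_iff_lt_mul hk, mul_comm m k]; exact ha.1, ha.2⟩
    · intro p hp
      simp only [Finset.mem_coe, Finset.mem_filter, Finset.mem_range, Finset.mem_product] at hp ⊢
      have h1 := hp.1
      have h2 := hp.2.1
      have h3 := hp.2.2
      have hd : (p.2 * k + p.1) / k = p.2 := by
        rw [mul_comm p.2 k, Nat.mul_add_div hk, Nat.div_eq_of_lt h1, add_zero]
      exact ⟨by nlinarith, by rw [hd]; exact h3⟩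
    · intro a _; simp only; rw [mul_comm]; exact Nat.div_add_mod a k
    · intro p hp
      simp only [Finset.mem_coe, Finset.mem_filter, Finset.mem_range, Finset.mem_product] at hp
      have hm' : (p.2 * k + p.1) % k = p.1 := by
        rw [Nat.mul_add_mod', Nat.mod_eq_of_lt hp.1]
      have hd : (p.2 * k + p.1) / k = p.2 := by
        rw [mul_comm p.2 k, Nat.mul_add_div hk, Nat.div_eq_of_lt hp.1, add_zero]
      simp [hm', hd]
  rw [key, Finset.card_product, Finset.card_range]

set_option maxHeartbeats 1000000 in
/-- The `K × (K/k)` matrix `P̃₁` obtained from procedure 3 of Algorithm 2 is a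
`k`-cyclic `2K/(K-kL+k)`-regular `(K/k, K, kL, (K-kL)(K-kL+k)/(2k))` PDA,
given that `P₁` is a 1-cyclic `2K/(K-kL+k)`-regular
`(K/k, K/k, L, (K-kL)(K-kL+k)/(2k²))` PDA. -/
theorem stmt10 (K k L : ℕ) (hk : 0 < k) (hL : 0 < L) (hKL : k * L < K)
    (hdk : k ∣ K) (hdv : (K - k * L + k) ∣ K)
    (hb : 2 ≤ K / (K - k * L + k))
    (hP1 : isPDA (K / k) (K / k) L ((K - k * L) * (K - k * L + k) / (2 * k ^ 2))
      (P1mat ((K - k * L) / k) (K / (K - k * L + k))))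
    (hP1reg : isRegularGen (2 * K / (K - k * L + k)) (K / k) (K / k) 0
      ((K - k * L) * (K - k * L + k) / (2 * k ^ 2))
      (P1mat ((K - k * L) / k) (K / (K - k * L + k))))
    (hP1cyc : isCyclic 1 (K / k) (K / k) L
      (P1mat ((K - k * L) / k) (K / (K - k * L + k)))) :
    isPDA (K / k) K (k * L) ((K - k * L) * (K - k * L + k) / (2 * k))
      (Ptilde1 K k L) ∧
    isRegularGen (2 * K / (K - k * L + k)) (K / k) K 0
      ((K - k * L) * (K - k * L + k) / (2 * k)) (Ptilde1 K k L) ∧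
    isCyclic k (K / k) K (k * L) (Ptilde1 K k L) := by
  have hkdvd : k ∣ K - k * L := Nat.dvd_sub hdk ⟨L, rfl⟩
  set n := (K - k * L) / k with hndef
  set b := K / (K - k * L + k) with hbdef
  set m := K / k with hmdef
  set S := (K - k * L) * (K - k * L + k) / (2 * k ^ 2) with hSdef
  have hkn : k * n = K - k * L := Nat.mul_div_cancel' hkdvd
  have hnpos : 0 < n := by
    rcases Nat.eq_zero_or_pos n with h | h
    · rw [h, mul_zero] at hkn; omega
    · exact h
  obtain ⟨e, he⟩ := Nat.even_mul_succ_self n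
  have hepos : 0 < e := by nlinarith
  have hSe : S = e := by
    rw [hSdef, ← hkn]
    have h1 : (k * n) * (k * n + k) = (2 * k ^ 2) * e := by
      have : (k * n) * (k * n + k) = k ^ 2 * (n * (n + 1)) := by ring
      rw [this, he]; ring
    rw [h1, Nat.mul_div_cancel_left e (by positivity)]
  have hSte : (K - k * L) * (K - k * L + k) / (2 * k) = k * S := by
    rw [hSe, ← hkn]
    have h1 : (k * n) * (k * n + k) = (2 * k) * (k * e) := by
      have : (k * n) * (k * n + k) = k ^ 2 * (n * (n + 1)) := by ring
      rw [this, he]; ring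
    rw [h1, Nat.mul_div_cancel_left _ (by positivity)]
  have hSpos : 0 < S := by rw [hSe]; exact hepos
  have hK : K = k * m := (Nat.mul_div_cancel' hdk).symm
  have hmpos : 0 < m := by
    rcases Nat.eq_zero_or_pos m with h | h
    · rw [h, mul_zero] at hK; omega
    · exact h
  have hdivlt : ∀ i, i < K → i / k < m := by
    intro i hi
    rw [Nat.div_lt_iff_lt_mul hk, mul_comm m k, ← hK]
    exact hi
  obtain ⟨hC1, hC2, hC2s, hC3⟩ := hP1
  have hPt : ∀ i j, Ptilde1 K k L i j
      = (P1mat n b (i / k) j).map (fun u => u + (i % k) * S) := fun i j => rfl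
  have hstar : ∀ i j, (Ptilde1 K k L i j = none ↔ P1mat n b (i / k) j = none) := by
    intro i j; rw [hPt]; exact Option.map_eq_none_iff
  refine ⟨⟨?_, ?_, ?_, ?_⟩, ?_, ?_⟩
  · -- C1
    intro j hj
    have hcong : ((Finset.range K).filter (fun i => Ptilde1 K k L i j = none))
        = (Finset.range (k * m)).filter (fun i => P1mat n b (i / k) j = none) := by
      ext i
      simp only [Finset.mem_filter, Finset.mem_range, ← hK, hstar i j]
    rw [hcong]
    exact (expandCard k m hk (fun r => P1mat n b r j = none)).trans (by rw [hC1 j hj])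
  · -- C2 bounds
    intro i hi j hj s hs
    rw [hPt, Option.map_eq_some_iff] at hs
    obtain ⟨u, hu, hv⟩ := hs
    have hub : u < S := (hC2 (i / k) (hdivlt i hi) j hj u hu).2
    have hmk : i % k < k := Nat.mod_lt i hk
    rw [hSte]
    exact ⟨Nat.zero_le _, by nlinarith⟩
  · -- C2 surjectivity
    intro s _ hslt
    rw [hSte] at hslt
    have htk : s / S < k := by rw [Nat.div_lt_iff_lt_mul hSpos, mul_comm k S] at *; omega
    obtain ⟨i₀, hi₀, j, hj, hij⟩ := hC2s (s % S) (Nat.zero_le _) (Nat.mod_lt _ hSpos)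
    refine ⟨i₀ * k + s / S, by rw [hK]; nlinarith, j, hj, ?_⟩
    have hd : (i₀ * k + s / S) / k = i₀ := by
      rw [mul_comm i₀ k, Nat.mul_add_div hk, Nat.div_eq_of_lt htk, add_zero]
    have hm' : (i₀ * k + s / S) % k = s / S := by
      rw [Nat.mul_add_mod', Nat.mod_eq_of_lt htk]
    rw [hPt, hd, hm', hij, Option.map_some]
    congr 1
    exact Nat.mod_add_div' s S
  · -- C3
    intro i₁ j₁ i₂ j₂ s h1 h2 h3 h4 e1 e2 hne
    rw [hPt, Option.map_eq_some_iff] at e1 e2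
    obtain ⟨u₁, hu₁, hv₁⟩ := e1
    obtain ⟨u₂, hu₂, hv₂⟩ := e2
    have b₁ : u₁ < S := (hC2 (i₁ / k) (hdivlt i₁ h1) j₁ h2 u₁ hu₁).2
    have b₂ : u₂ < S := (hC2 (i₂ / k) (hdivlt i₂ h3) j₂ h4 u₂ hu₂).2
    have hd₁ : s / S = i₁ % k := by
      rw [← hv₁, Nat.add_mul_div_right u₁ _ hSpos, Nat.div_eq_of_lt b₁, zero_add]
    have hd₂ : s / S = i₂ % k := by
      rw [← hv₂, Nat.add_mul_div_right u₂ _ hSpos, Nat.div_eq_of_lt b₂, zero_add]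
    have hm₁ : s % S = u₁ := by
      rw [← hv₁, Nat.add_mul_mod_self_right, Nat.mod_eq_of_lt b₁]
    have hm₂ : s % S = u₂ := by
      rw [← hv₂, Nat.add_mul_mod_self_right, Nat.mod_eq_of_lt b₂]
    have hu₂' : P1mat n b (i₂ / k) j₂ = some u₁ := by rw [← hm₁, hm₂]; exact hu₂
    have hne' : (i₁ / k, j₁) ≠ (i₂ / k, j₂) := by
      intro h
      apply hne
      have hdd : i₁ / k = i₂ / k := congrArg Prod.fst h
      have hjj : j₁ = j₂ := congrArg Prod.snd h
      have hmm : i₁ % k = i₂ % k := hd₁.symm.trans hd₂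
      have : i₁ = i₂ := by
        conv_lhs => rw [← Nat.div_add_mod i₁ k]
        conv_rhs => rw [← Nat.div_add_mod i₂ k]
        rw [hdd, hmm]
      rw [this, hjj]
    obtain ⟨hdne, hjne, hn1, hn2⟩ := hC3 (i₁ / k) j₁ (i₂ / k) j₂ u₁
      (hdivlt i₁ h1) h2 (hdivlt i₂ h3) h4 hu₁ hu₂' hne'
    refine ⟨?_, hjne, ?_, ?_⟩
    · intro h; exact hdne (by rw [h])
    · rw [hstar]; exact hn1
    · rw [hstar]; exact hn2
  · -- regularity
    intro s _ hslt
    rw [hSte] at hslt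
    have htk : s / S < k := by rw [Nat.div_lt_iff_lt_mul hSpos, mul_comm k S] at *; omega
    have hchar : ∀ i < K, ∀ j < m,
        (Ptilde1 K k L i j = some s ↔ (i % k = s / S ∧ P1mat n b (i / k) j = some (s % S))) := by
      intro i hi j hj
      constructor
      · intro h
        rw [hPt, Option.map_eq_some_iff] at h
        obtain ⟨u, hu, hv⟩ := h
        have hub : u < S := (hC2 (i / k) (hdivlt i hi) j hj u hu).2
        have hdd : s / S = i % k := by
          rw [← hv, Nat.add_mul_div_right u _ hSpos, Nat.div_eq_of_lt hub, zero_add]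
        have hmm : s % S = u := by
          rw [← hv, Nat.add_mul_mod_self_right, Nat.mod_eq_of_lt hub]
        exact ⟨hdd.symm, by rw [hmm]; exact hu⟩
      · rintro ⟨hmod, hu⟩
        rw [hPt, hu, Option.map_some, hmod]
        congr 1
        exact Nat.mod_add_div' s S
    have key : (((Finset.range K) ×ˢ (Finset.range m)).filter
          (fun p => Ptilde1 K k L p.1 p.2 = some s)).card
        = (((Finset.range m) ×ˢ (Finset.range m)).filter
          (fun p => P1mat n b p.1 p.2 = some (s % S))).card := by
      apply Finset.card_nbij' (fun p => (p.1 / k, p.2)) (fun q => (q.1 * k + s / S, q.2))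
      · intro p hp
        simp only [Finset.mem_coe, Finset.mem_filter, Finset.mem_product, Finset.mem_range] at hp ⊢
        have h1 := hp.1.1
        have h2 := hp.1.2
        have h3 := ((hchar p.1 h1 p.2 h2).mp hp.2).2
        exact ⟨⟨hdivlt p.1 h1, h2⟩, h3⟩
      · intro q hq
        simp only [Finset.mem_coe, Finset.mem_filter, Finset.mem_product, Finset.mem_range] at hq ⊢
        have h1 := hq.1.1
        have h2 := hq.1.2
        have h3 := hq.2
        have hd : (q.1 * k + s / S) / k = q.1 := by
          rw [mul_comm q.1 k, Nat.mul_add_div hk, Nat.div_eq_of_lt htk, add_zero]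
        have hm' : (q.1 * k + s / S) % k = s / S := by
          rw [Nat.mul_add_mod', Nat.mod_eq_of_lt htk]
        have hlt : q.1 * k + s / S < K := by rw [hK]; nlinarith
        exact ⟨⟨hlt, h2⟩, (hchar _ hlt q.2 h2).mpr ⟨hm', by rw [hd]; exact h3⟩⟩
      · intro p hp
        simp only [Finset.mem_coe, Finset.mem_filter, Finset.mem_product, Finset.mem_range] at hp
        have hmod := ((hchar p.1 hp.1.1 p.2 hp.1.2).mp hp.2).1
        have h6 : p.1 / k * k + s / S = p.1 := by
          rw [← hmod]; exact Nat.div_add_mod' p.1 k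
        beta_reduce
        rw [h6]
      · intro q hq
        simp only [Finset.mem_coe, Finset.mem_filter, Finset.mem_product, Finset.mem_range] at hq
        have hd : (q.1 * k + s / S) / k = q.1 := by
          rw [mul_comm q.1 k, Nat.mul_add_div hk, Nat.div_eq_of_lt htk, add_zero]
        simp [hd]
    rw [key]
    exact hP1reg (s % S) (Nat.zero_le _) (Nat.mod_lt _ hSpos)
  · -- cyclicity
    obtain ⟨st, hst1, hst2⟩ := hP1cyc
    refine ⟨fun j => k * st j, ?_, ?_⟩
    · intro j hj i hi
      rw [hstar]
      rw [hst1 j hj (i / k) (hdivlt i hi)]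
      constructor
      · rintro ⟨r, hr, hir⟩
        refine ⟨k * r + i % k, by have := Nat.mod_lt i hk; nlinarith, ?_⟩
        rw [hK]
        have h5 : k * st j + (k * r + i % k) = k * (st j + r) + i % k := by ring
        rw [h5, modHelper k m (st j + r) (i % k) (Nat.mod_lt i hk) hmpos, ← hir]
        exact (Nat.div_add_mod i k).symm
      · rintro ⟨r, hr, hir⟩
        refine ⟨r / k, by rw [Nat.div_lt_iff_lt_mul hk, mul_comm L k]; exact hr, ?_⟩
        rw [hK] at hir
        have h5 : k * st j + r = k * (st j + r / k) + r % k := by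
          conv_lhs => rw [← Nat.div_add_mod r k]
          ring
        rw [h5, modHelper k m _ _ (Nat.mod_lt r hk) hmpos] at hir
        rw [hir, Nat.mul_add_div hk, Nat.div_eq_of_lt (Nat.mod_lt r hk), add_zero]
    · intro j hj
      rw [hK, show k * st j + k = k * (st j + 1) by ring,
        Nat.mul_mod_mul_left, Nat.mul_mod_mul_left, hst2 j hj]
end

section
/- If P̃₁ is a k-cyclic g-regular (K/k, K, kL, S̃₁) PDA, then for each t ∈ [2,k] the matrix P̃ₜ = P̃₁ + (t-1)S̃₁ (add (t-1)S̃₁ to each integer entry, stars unchanged) is a k-cyclic g-regular PDA on the integer alphabet [(t-1)S̃₁, tS̃₁), and the K×K concatenation P = [P̃₁ P̃₂ ... P̃ₖ] is a k-cyclic g-regular (K, K, kL, kS̃₁) PDA. -/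
lemma eq_decomp {S a b u v : ℕ} (ha : a < S) (hb : b < S)
    (h : a + u * S = b + v * S) : a = b ∧ u = v := by
  have hS : 0 < S := lt_of_le_of_lt (Nat.zero_le a) ha
  constructor
  · have h1 := congrArg (· % S) h
    simpa [Nat.add_mul_mod_self_right, Nat.mod_eq_of_lt ha, Nat.mod_eq_of_lt hb] using h1
  · have h1 := congrArg (· / S) h
    simpa [Nat.add_mul_div_right _ _ hS, Nat.div_eq_of_lt ha, Nat.div_eq_of_lt hb] using h1

/-- If `P̃₁` is a `k`-cyclic `g`-regular `(K/k, K, kL, S̃₁)` PDA, then each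
shifted matrix `P̃ₜ = P̃₁ + (t-1)S̃₁` (for `t ∈ [2, k]`) is a `k`-cyclic
`g`-regular PDA on the integer alphabet `[(t-1)S̃₁, tS̃₁)`, and the `K × K`
concatenation `P = [P̃₁ P̃₂ … P̃ₖ]` is a `k`-cyclic `g`-regular
`(K, K, kL, kS̃₁)` PDA. -/
theorem stmt11 (K k L g S1 : ℕ) (Pt : ℕ → ℕ → Option ℕ)
    (hK : 0 < K) (hk : 0 < k) (hL : 0 < L)
    (hdk : k ∣ K) (hdv : (K - k * L + k) ∣ K) (hKL : k * L < K)
    (hP : isPDA (K / k) K (k * L) S1 Pt)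
    (hReg : isRegularGen g (K / k) K 0 S1 Pt)
    (hCyc : isCyclic k (K / k) K (k * L) Pt) :
    (∀ t : ℕ, 2 ≤ t → t ≤ k →
      isPDAgen (K / k) K (k * L) ((t - 1) * S1) (t * S1)
        (fun i j => (Pt i j).map (fun s => s + (t - 1) * S1)) ∧
      isRegularGen g (K / k) K ((t - 1) * S1) (t * S1)
        (fun i j => (Pt i j).map (fun s => s + (t - 1) * S1)) ∧
      isCyclic k (K / k) K (k * L)
        (fun i j => (Pt i j).map (fun s => s + (t - 1) * S1))) ∧
    isPDA K K (k * L) (k * S1)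
      (fun i j => (Pt i (j % (K / k))).map (fun s => s + (j / (K / k)) * S1)) ∧
    isRegularGen g K K 0 (k * S1)
      (fun i j => (Pt i (j % (K / k))).map (fun s => s + (j / (K / k)) * S1)) ∧
    isCyclic k K K (k * L)
      (fun i j => (Pt i (j % (K / k))).map (fun s => s + (j / (K / k)) * S1)) := by
  obtain ⟨hC1, hRange, hC2, hC3⟩ := hP
  set q := K / k with hqdef
  have hqk : q * k = K := Nat.div_mul_cancel hdk
  have hq : 0 < q := Nat.div_pos (Nat.le_of_dvd hK hdk) hk
  have hmodq : ∀ j, j < K → j % q < q := fun j _ => Nat.mod_lt j hq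
  have hdivq : ∀ j, j < K → j / q < k := by
    intro j hj
    rw [Nat.div_lt_iff_lt_mul hq, mul_comm k q, hqk]
    exact hj
  refine ⟨?_, ⟨?_, ?_, ?_, ?_⟩, ?_, ?_⟩
  · -- Part A : shifted matrices
    intro t ht2 htk
    have hts : (t - 1) * S1 + S1 = t * S1 := by
      rcases t with _ | n
      · omega
      · simp [Nat.succ_sub_one, Nat.succ_mul]
    refine ⟨⟨?_, ?_, ?_, ?_⟩, ?_, ?_⟩
    · -- C1
      intro j hj
      rw [Finset.filter_congr (fun i _ => by
        simp only [Option.map_eq_none_iff] : ∀ i ∈ Finset.range K,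
          ((Pt i j).map (fun s => s + (t - 1) * S1) = none ↔ Pt i j = none))]
      exact hC1 j hj
    · -- range
      intro i hi j hj s hsome
      obtain ⟨a, ha, rfl⟩ := Option.map_eq_some_iff.mp hsome
      have := hRange i hi j hj a ha
      omega
    · -- C2
      intro s hlo hhi
      obtain ⟨i, hi, j, hj, hsome⟩ := hC2 (s - (t - 1) * S1) (Nat.zero_le _) (by omega)
      have hv : s - (t - 1) * S1 + (t - 1) * S1 = s := by omega
      exact ⟨i, hi, j, hj, by simp [hsome, hv]⟩
    · -- C3
      intro i₁ j₁ i₂ j₂ s hi₁ hj₁ hi₂ hj₂ h₁ h₂ hne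
      obtain ⟨a, ha, hav⟩ := Option.map_eq_some_iff.mp h₁
      obtain ⟨b, hb, hbv⟩ := Option.map_eq_some_iff.mp h₂
      have hab : a = b := by omega
      subst hab
      obtain ⟨e1, e2, e3, e4⟩ := hC3 i₁ j₁ i₂ j₂ a hi₁ hj₁ hi₂ hj₂ ha hb hne
      exact ⟨e1, e2, by simp [e3], by simp [e4]⟩
    · -- regular
      intro s hlo hhi
      rw [Finset.filter_congr (fun p _ => by
        constructor
        · intro h
          obtain ⟨a, ha, hav⟩ := Option.map_eq_some_iff.mp h
          have : a = s - (t - 1) * S1 := by omega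
          rwa [this] at ha
        · intro h
          rw [h]
          simp
          omega : ∀ p ∈ Finset.range K ×ˢ Finset.range q,
          ((Pt p.1 p.2).map (fun s' => s' + (t - 1) * S1) = some s ↔
            Pt p.1 p.2 = some (s - (t - 1) * S1)))]
      exact hReg (s - (t - 1) * S1) (Nat.zero_le _) (by omega)
    · -- cyclic
      obtain ⟨st, h1, h2⟩ := hCyc
      exact ⟨st, fun j hj i hi => by
        simp only [Option.map_eq_none_iff]
        exact h1 j hj i hi, h2⟩
  · -- Part B C1
    intro j hj
    rw [Finset.filter_congr (fun i _ => by
      simp only [Option.map_eq_none_iff] : ∀ i ∈ Finset.range K,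
        ((Pt i (j % q)).map (fun s => s + j / q * S1) = none ↔ Pt i (j % q) = none))]
    exact hC1 (j % q) (hmodq j hj)
  · -- Part B range
    intro i hi j hj s hsome
    obtain ⟨a, ha, rfl⟩ := Option.map_eq_some_iff.mp hsome
    have h1 := hRange i hi (j % q) (hmodq j hj) a ha
    have h2 := hdivq j hj
    refine ⟨Nat.zero_le _, ?_⟩
    have h3 : j / q + 1 ≤ k := h2
    calc a + j / q * S1 < S1 + j / q * S1 := by omega
      _ = (j / q + 1) * S1 := by ring
      _ ≤ k * S1 := Nat.mul_le_mul_right _ h3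
  · -- Part B C2
    intro s _ hhi
    have hS1 : 0 < S1 := by
      rcases Nat.eq_zero_or_pos S1 with h | h
      · simp [h] at hhi
      · exact h
    set T := s / S1 with hT
    set r := s % S1 with hr
    have hTk : T < k := (Nat.div_lt_iff_lt_mul hS1).mpr (by omega)
    have hrS : r < S1 := Nat.mod_lt s hS1
    have hsplit : r + T * S1 = s := Nat.mod_add_div' s S1
    obtain ⟨i, hi, j, hj, hsome⟩ := hC2 r (Nat.zero_le _) hrS
    refine ⟨i, hi, j + T * q, ?_, ?_⟩
    · calc j + T * q < q + T * q := by omega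
        _ = (T + 1) * q := by ring
        _ ≤ k * q := Nat.mul_le_mul_right _ (by omega)
        _ = K := by rw [mul_comm]; exact hqk
    · have e1 : (j + T * q) % q = j := by
        rw [Nat.add_mul_mod_self_right, Nat.mod_eq_of_lt hj]
      have e2 : (j + T * q) / q = T := by
        rw [Nat.add_mul_div_right _ _ hq, Nat.div_eq_of_lt hj]; omega
      simp only [e1, e2, hsome, Option.map_some]
      exact congrArg some hsplit
  · -- Part B C3
    intro i₁ j₁ i₂ j₂ s hi₁ hj₁ hi₂ hj₂ h₁ h₂ hne
    obtain ⟨a, ha, hav⟩ := Option.map_eq_some_iff.mp h₁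
    obtain ⟨b, hb, hbv⟩ := Option.map_eq_some_iff.mp h₂
    have haS : a < S1 := (hRange i₁ hi₁ (j₁ % q) (hmodq j₁ hj₁) a ha).2
    have hbS : b < S1 := (hRange i₂ hi₂ (j₂ % q) (hmodq j₂ hj₂) b hb).2
    obtain ⟨hab, hdd⟩ := eq_decomp haS hbS (hav.trans hbv.symm)
    subst hab
    have hneq : (i₁, j₁ % q) ≠ (i₂, j₂ % q) := by
      intro hEq
      apply hne
      have h5 : i₁ = i₂ := congrArg Prod.fst hEq
      have h6 : j₁ % q = j₂ % q := congrArg Prod.snd hEq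
      have h7 := Nat.div_add_mod j₁ q
      have h8 := Nat.div_add_mod j₂ q
      have h9 : q * (j₁ / q) = q * (j₂ / q) := by rw [hdd]
      have : j₁ = j₂ := by omega
      rw [h5, this]
    obtain ⟨e1, e2, e3, e4⟩ := hC3 i₁ (j₁ % q) i₂ (j₂ % q) a hi₁ (hmodq j₁ hj₁)
      hi₂ (hmodq j₂ hj₂) ha hb hneq
    refine ⟨e1, ?_, by simp [e3], by simp [e4]⟩
    intro hEq
    exact e2 (by rw [hEq])
  · -- Part B regular
    intro s _ hhi
    have hS1 : 0 < S1 := by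
      rcases Nat.eq_zero_or_pos S1 with h | h
      · simp [h] at hhi
      · exact h
    set T := s / S1 with hT
    set r := s % S1 with hr
    have hTk : T < k := (Nat.div_lt_iff_lt_mul hS1).mpr (by omega)
    have hrS : r < S1 := Nat.mod_lt s hS1
    have hsplit : r + T * S1 = s := Nat.mod_add_div' s S1
    have key : ∀ p : ℕ × ℕ,
        p ∈ (Finset.range K ×ˢ Finset.range K).filter
          (fun p => (Pt p.1 (p.2 % q)).map (fun s' => s' + p.2 / q * S1) = some s) →
        Pt p.1 (p.2 % q) = some r ∧ p.2 / q = T := by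
      intro p hp
      rw [Finset.mem_filter, Finset.mem_product, Finset.mem_range, Finset.mem_range] at hp
      obtain ⟨⟨hp1, hp2⟩, hp3⟩ := hp
      obtain ⟨a, ha, hav⟩ := Option.map_eq_some_iff.mp hp3
      have haS : a < S1 := (hRange p.1 hp1 (p.2 % q) (hmodq p.2 hp2) a ha).2
      obtain ⟨hab, hdd⟩ := eq_decomp haS hrS (hav.trans hsplit.symm)
      exact ⟨hab ▸ ha, hdd⟩
    rw [Finset.card_bij' (i := fun p _ => (p.1, p.2 % q))
      (j := fun p _ => (p.1, p.2 + T * q)) ?_ ?_ ?_ ?_]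
    · exact hReg r (Nat.zero_le _) hrS
    · -- hi : maps into target
      intro p hp
      obtain ⟨h1, h2⟩ := key p hp
      rw [Finset.mem_filter, Finset.mem_product, Finset.mem_range, Finset.mem_range] at hp ⊢
      exact ⟨⟨hp.1.1, hmodq p.2 hp.1.2⟩, h1⟩
    · -- hj : inverse maps into source
      intro p hp
      rw [Finset.mem_filter, Finset.mem_product, Finset.mem_range, Finset.mem_range] at hp ⊢
      obtain ⟨⟨hp1, hp2⟩, hp3⟩ := hp
      have e1 : (p.2 + T * q) % q = p.2 := by
        rw [Nat.add_mul_mod_self_right, Nat.mod_eq_of_lt hp2]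
      have e2 : (p.2 + T * q) / q = T := by
        rw [Nat.add_mul_div_right _ _ hq, Nat.div_eq_of_lt hp2]; omega
      refine ⟨⟨hp1, ?_⟩, ?_⟩
      · calc p.2 + T * q < q + T * q := by omega
          _ = (T + 1) * q := by ring
          _ ≤ k * q := Nat.mul_le_mul_right _ (by omega)
          _ = K := by rw [mul_comm]; exact hqk
      · simp only [e1, e2, hp3, Option.map_some]
        exact congrArg some hsplit
    · -- left inverse
      intro p hp
      obtain ⟨h1, h2⟩ := key p hp
      have h7 := Nat.div_add_mod p.2 q
      have : p.2 % q + T * q = p.2 := by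
        rw [← h2]; exact Nat.mod_add_div' p.2 q
      simp [this]
    · -- right inverse
      intro p hp
      rw [Finset.mem_filter, Finset.mem_product, Finset.mem_range, Finset.mem_range] at hp
      have : (p.2 + T * q) % q = p.2 := by
        rw [Nat.add_mul_mod_self_right, Nat.mod_eq_of_lt hp.1.2]
      simp [this]
  · -- Part B cyclic
    obtain ⟨st, h1, h2⟩ := hCyc
    have key : ∀ j, j < q → st j % K = (st 0 + j * k) % K := by
      intro j
      induction j with
      | zero => intro _; simp
      | succ n ih =>
        intro h
        have e1 : st (n + 1) % K = (st n + k) % K := h2 n h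
        have e2 : st n % K = (st 0 + n * k) % K := ih (by omega)
        calc st (n + 1) % K = (st n + k) % K := e1
          _ = (st n % K + k) % K := (Nat.mod_add_mod _ _ _).symm
          _ = ((st 0 + n * k) % K + k) % K := by rw [e2]
          _ = (st 0 + n * k + k) % K := by rw [Nat.mod_add_mod]
          _ = (st 0 + (n + 1) * k) % K := by ring_nf
    refine ⟨fun j => st (j % q), ?_, ?_⟩
    · intro j hj i hi
      simp only [Option.map_eq_none_iff]
      exact h1 (j % q) (hmodq j hj) i hi
    · intro j hj
      show st ((j + 1) % q) % K = (st (j % q) + k) % K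
      rcases Nat.lt_or_ge (j % q + 1) q with hc | hc
      · have e : (j + 1) % q = j % q + 1 := by
          conv_lhs => rw [Nat.add_mod]
          have hq2 : 1 < q := by omega
          rw [Nat.mod_eq_of_lt hq2, Nat.mod_eq_of_lt hc]
        rw [e]
        exact h2 (j % q) hc
      · -- boundary : j % q = q - 1
        have hjq : j % q = q - 1 := by
          have := Nat.mod_lt j hq
          omega
        have e : (j + 1) % q = 0 := by
          conv_lhs => rw [Nat.add_mod, hjq]
          have : q - 1 + 1 % q = q ∨ q = 1 := by
            rcases Nat.lt_or_ge 1 q with h | h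
            · left; rw [Nat.mod_eq_of_lt h]; omega
            · right; omega
          rcases this with h | h
          · rw [h]; exact Nat.mod_self q
          · simp [h]
        rw [e, hjq]
        have e3 : st (q - 1) % K = (st 0 + (q - 1) * k) % K := key (q - 1) (by omega)
        calc st 0 % K = (st 0 + K) % K := by rw [Nat.add_mod_right]
          _ = (st 0 + (q - 1) * k + k) % K := by
              congr 1
              have : (q - 1) * k + k = q * k := by
                rcases q with _ | m
                · omega
                · simp [Nat.succ_sub_one, Nat.succ_mul]
              omega
          _ = ((st 0 + (q - 1) * k) % K + k) % K := by rw [Nat.mod_add_mod]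
          _ = (st (q - 1) % K + k) % K := by rw [e3]
          _ = (st (q - 1) + k) % K := by rw [Nat.mod_add_mod]
end
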